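/- If G is a connected unicyclic graph on n vertices with α(G) + μ(G) = n − 1, then for every edge e of its unique cycle, μ(G − e) = μ(G) and α(G − e) = α(G) + 1. -/

import Mathlib

/-- A set of vertices is independent if no two of its vertices are adjacent. -/
def SimpleGraph.IsIndepSet' {V : Type*} (G : SimpleGraph V) (s : Set V) : Prop :=
  s.Pairwise (fun a b => ¬ G.Adj a b)

/-- The independence number: the maximum cardinality of an independent set. -/
noncomputable def indepNum {V : Type*} (G : SimpleGraph V) : ℕ :=
  sSup {n | ∃ s : Set V, G.IsIndepSet' s ∧ s.ncard = n}

/-- The matching number: the maximum cardinality of a matching. -/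
noncomputable def matchNum {V : Type*} (G : SimpleGraph V) : ℕ :=
  sSup {n | ∃ M : SimpleGraph.Subgraph G, M.IsMatching ∧ M.edgeSet.ncard = n}

/-- A maximum independent set. -/
def IsMaxIndepSet {V : Type*} (G : SimpleGraph V) (s : Set V) : Prop :=
  G.IsIndepSet' s ∧ s.ncard = indepNum G

/-- The core: intersection of all maximum independent sets. -/
noncomputable def core {V : Type*} (G : SimpleGraph V) : Set V :=
  ⋂₀ {s | IsMaxIndepSet G s}

/-- Open neighborhood of a set. -/
def nbhdSet {V : Type*} (G : SimpleGraph V) (s : Set V) : Set V :=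
  {v | ∃ w ∈ s, G.Adj v w}

/-- Closed neighborhood of a set. -/
def closedNbhdSet {V : Type*} (G : SimpleGraph V) (s : Set V) : Set V :=
  s ∪ nbhdSet G s

/-- The tree component of `G - xy` containing `x`. -/
noncomputable def treeComp {V : Type*} (G : SimpleGraph V) (x y : V) :
    SimpleGraph ((G.deleteEdges {s(x,y)}).connectedComponentMk x).supp :=
  (G.deleteEdges {s(x,y)}).induce ((G.deleteEdges {s(x,y)}).connectedComponentMk x).supp

section Aux

open SimpleGraph

variable {V : Type*}

private lemma indep_bdd [Finite V] (G : SimpleGraph V) :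
    BddAbove {n | ∃ s : Set V, G.IsIndepSet' s ∧ s.ncard = n} := by
  refine ⟨Nat.card V, ?_⟩
  rintro n ⟨s, -, rfl⟩
  exact le_trans (Set.ncard_le_ncard (Set.subset_univ s) Set.finite_univ)
    (le_of_eq (Set.ncard_univ V))

private lemma indep_ne (G : SimpleGraph V) :
    Set.Nonempty {n | ∃ s : Set V, G.IsIndepSet' s ∧ s.ncard = n} :=
  ⟨0, ∅, by simp [SimpleGraph.IsIndepSet'], by simp⟩

private lemma le_indepNum [Finite V] {G : SimpleGraph V} {s : Set V}
    (h : G.IsIndepSet' s) : s.ncard ≤ _root_.indepNum G :=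
  le_csSup (indep_bdd G) ⟨s, h, rfl⟩

private lemma exists_maxIndep [Finite V] (G : SimpleGraph V) :
    ∃ s : Set V, G.IsIndepSet' s ∧ s.ncard = _root_.indepNum G :=
  Nat.sSup_mem (indep_ne G) (indep_bdd G)

private lemma match_bdd [Finite V] (G : SimpleGraph V) :
    BddAbove {n | ∃ M : SimpleGraph.Subgraph G, M.IsMatching ∧ M.edgeSet.ncard = n} := by
  refine ⟨Nat.card (Sym2 V), ?_⟩
  rintro n ⟨M, -, rfl⟩
  exact le_trans (Set.ncard_le_ncard (Set.subset_univ _) Set.finite_univ)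
    (le_of_eq (Set.ncard_univ (Sym2 V)))

private lemma match_ne (G : SimpleGraph V) :
    Set.Nonempty {n | ∃ M : SimpleGraph.Subgraph G, M.IsMatching ∧ M.edgeSet.ncard = n} := by
  refine ⟨0, ⊥, ?_, ?_⟩
  · intro v hv; simp at hv
  · simp [SimpleGraph.Subgraph.edgeSet_bot]

private lemma le_matchNum [Finite V] {G : SimpleGraph V} {M : SimpleGraph.Subgraph G}
    (h : M.IsMatching) : M.edgeSet.ncard ≤ matchNum G :=
  le_csSup (match_bdd G) ⟨M, h, rfl⟩

private lemma exists_maxMatching [Finite V] (G : SimpleGraph V) :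
    ∃ M : SimpleGraph.Subgraph G, M.IsMatching ∧ M.edgeSet.ncard = matchNum G :=
  Nat.sSup_mem (match_ne G) (match_bdd G)

/-- Lift a subgraph of a smaller graph to a subgraph of a bigger graph. -/
private def liftSub {G H : SimpleGraph V} (h : G ≤ H) (M : G.Subgraph) : H.Subgraph where
  verts := M.verts
  Adj := M.Adj
  adj_sub := fun hab => h (M.adj_sub hab)
  edge_vert := M.edge_vert
  symm := M.symm

private lemma liftSub_matching {G H : SimpleGraph V} {h : G ≤ H} {M : G.Subgraph}
    (hM : M.IsMatching) : (liftSub h M).IsMatching := fun _ hv => hM hv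

private lemma liftSub_edgeSet {G H : SimpleGraph V} (h : G ≤ H) (M : G.Subgraph) :
    (liftSub h M).edgeSet = M.edgeSet := rfl

private lemma liftSub_verts {G H : SimpleGraph V} (h : G ≤ H) (M : G.Subgraph) :
    (liftSub h M).verts = M.verts := rfl

private lemma matchNum_mono [Finite V] {G H : SimpleGraph V} (h : G ≤ H) :
    matchNum G ≤ matchNum H := by
  obtain ⟨M, hM, hcard⟩ := exists_maxMatching G
  calc matchNum G = (liftSub h M).edgeSet.ncard := by rw [liftSub_edgeSet, hcard]
    _ ≤ matchNum H := le_matchNum (liftSub_matching hM)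

private lemma indepNum_deleteEdge_le [Finite V] (G : SimpleGraph V) (x y : V) :
    _root_.indepNum (G.deleteEdges {s(x,y)}) ≤ _root_.indepNum G + 1 := by
  obtain ⟨s, hs, hcard⟩ := exists_maxIndep (G.deleteEdges {s(x,y)})
  have h2 : G.IsIndepSet' (s \ {y}) := by
    intro a ha b hb hne hadj
    have hay : a ≠ y := ha.2
    have hby : b ≠ y := hb.2
    have : (G.deleteEdges {s(x,y)}).Adj a b := by
      rw [SimpleGraph.deleteEdges_adj]
      refine ⟨hadj, ?_⟩
      simp only [Set.mem_singleton_iff, Sym2.eq, Sym2.rel_iff', Prod.mk.injEq, Prod.swap_prod_mk]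
      rintro (⟨rfl, rfl⟩ | ⟨rfl, rfl⟩)
      · exact hby rfl
      · exact hay rfl
    exact hs ha.1 hb.1 hne this
  have h3 := le_indepNum h2
  by_cases hy : y ∈ s
  · have := Set.ncard_diff_singleton_add_one hy (Set.toFinite s)
    omega
  · rw [Set.diff_singleton_eq_self hy] at h3
    omega

/-- Deleting a cycle edge preserves connectivity. -/
private lemma connected_deleteEdges_of_cycle {G : SimpleGraph V} (hconn : G.Connected)
    {v : V} {c : G.Walk v v} (hc : c.IsCycle) {e : Sym2 V} (he : e ∈ c.edges) :
    (G.deleteEdges {e}).Connected := by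
  induction e using Sym2.ind with
  | _ x y =>
    have hreach : (G.deleteEdges {s(x,y)}).Reachable x y := by
      have h := (SimpleGraph.adj_and_reachable_delete_edges_iff_exists_cycle
        (G := G) (v := x) (w := y)).mpr ⟨v, c, hc, he⟩
      exact h.2
    have key : ∀ {a b : V} (_ : G.Walk a b), (G.deleteEdges {s(x,y)}).Reachable a b := by
      intro a b p
      induction p with
      | nil => exact SimpleGraph.Reachable.refl _
      | @cons a c' b h q ih =>
        refine SimpleGraph.Reachable.trans ?_ ih
        by_cases hmem : s(a, c') = s(x, y)
        · rw [Sym2.eq_iff] at hmem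
          rcases hmem with ⟨rfl, rfl⟩ | ⟨rfl, rfl⟩
          · exact hreach
          · exact hreach.symm
        · exact SimpleGraph.Adj.reachable (by rw [SimpleGraph.deleteEdges_adj]; exact ⟨h, hmem⟩)
    have : Nonempty V := hconn.nonempty
    exact SimpleGraph.Connected.mk fun a b => (hconn.preconnected a b).elim fun p => key p

/-- A finite acyclic graph with an edge has a leaf edge. -/
private lemma exists_leaf [Fintype V] {G : SimpleGraph V} (hac : G.IsAcyclic)
    {u0 v0 : V} (h0 : G.Adj u0 v0) :
    ∃ x y, G.Adj x y ∧ ∀ z, G.Adj x z → z = y := by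
  classical
  set S := {n | ∃ (x y : V) (p : G.Walk x y), p.IsPath ∧ p.length = n} with hS
  have hbdd : BddAbove S := by
    refine ⟨Fintype.card V, ?_⟩
    rintro n ⟨x, y, p, hp, rfl⟩
    exact le_of_lt hp.length_lt
  have h1path : (SimpleGraph.Walk.cons h0 SimpleGraph.Walk.nil).IsPath := by
    rw [SimpleGraph.Walk.cons_isPath_iff]
    exact ⟨SimpleGraph.Walk.IsPath.nil, by simp [h0.ne]⟩
  have hne : S.Nonempty := ⟨1, u0, v0, _, h1path, by simp⟩
  have hmem : sSup S ∈ S := Nat.sSup_mem hne hbdd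
  have hn1 : 1 ≤ sSup S := le_csSup hbdd ⟨u0, v0, _, h1path, by simp⟩
  obtain ⟨x, y, p, hp, hlen⟩ := hmem
  cases p with
  | nil => simp at hlen; omega
  | @cons _ w _ hadj q =>
    rw [SimpleGraph.Walk.cons_isPath_iff] at hp
    obtain ⟨hq, hxq⟩ := hp
    refine ⟨x, w, hadj, ?_⟩
    intro z hz
    by_contra hzw
    have hzx : z ≠ x := fun h => G.irrefl (h ▸ hz)
    by_cases hzs : z ∈ q.support
    · -- build a cycle, contradiction
      have hq1 : (q.takeUntil z hzs).IsPath := hq.takeUntil hzs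
      have hP : (SimpleGraph.Walk.cons hadj (q.takeUntil z hzs)).IsPath := by
        rw [SimpleGraph.Walk.cons_isPath_iff]
        exact ⟨hq1, fun hx => hxq (q.support_takeUntil_subset hzs hx)⟩
      have hedge : ¬ s(z, x) ∈ (SimpleGraph.Walk.cons hadj (q.takeUntil z hzs)).edges := by
        intro hmem
        rw [SimpleGraph.Walk.edges_cons, List.mem_cons] at hmem
        rcases hmem with hmem | hmem
        · rw [Sym2.eq_iff] at hmem
          rcases hmem with ⟨hzx', -⟩ | ⟨hzw', -⟩
          · exact hzx hzx'
          · exact hzw hzw'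
        · exact hxq (q.support_takeUntil_subset hzs
            ((q.takeUntil z hzs).snd_mem_support_of_mem_edges hmem))
      have hcyc := SimpleGraph.Path.cons_isCycle
        ⟨SimpleGraph.Walk.cons hadj (q.takeUntil z hzs), hP⟩ hz.symm hedge
      exact hac _ hcyc
    · -- extend the path, contradiction with maximality
      have hzs' : z ∉ (SimpleGraph.Walk.cons hadj q).support := by
        rw [SimpleGraph.Walk.support_cons, List.mem_cons]
        rintro (rfl | h)
        · exact hzx rfl
        · exact hzs h
      have hext : (SimpleGraph.Walk.cons hz.symm (SimpleGraph.Walk.cons hadj q)).IsPath := by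
        rw [SimpleGraph.Walk.cons_isPath_iff]
        exact ⟨by rw [SimpleGraph.Walk.cons_isPath_iff]; exact ⟨hq, hxq⟩, hzs'⟩
      have : sSup S + 1 ∈ S := ⟨z, y, _, hext, by simp [hlen]⟩
      have := le_csSup hbdd this
      omega

/-- Forests satisfy `n ≤ α + μ`. -/
private lemma forest_bound [Fintype V] :
    ∀ (k : ℕ) (G : SimpleGraph V), G.edgeSet.ncard ≤ k → G.IsAcyclic →
      Fintype.card V ≤ _root_.indepNum G + matchNum G := by
  intro k
  induction k with
  | zero =>
    intro G hk _
    have hempty : G.edgeSet = ∅ := by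
      rw [← Set.ncard_eq_zero (Set.toFinite _)]; omega
    have hindep : G.IsIndepSet' (Set.univ : Set V) := by
      intro a _ b _ _ hadj
      have : s(a,b) ∈ G.edgeSet := hadj
      rw [hempty] at this
      exact this
    have := le_indepNum hindep
    rw [Set.ncard_univ, Nat.card_eq_fintype_card] at this
    omega
  | succ k ih =>
    intro G hk hac
    by_cases hk' : G.edgeSet.ncard ≤ k
    · exact ih G hk' hac
    · have hpos : 0 < G.edgeSet.ncard := by omega
      rw [Set.ncard_pos (Set.toFinite _)] at hpos
      obtain ⟨e0, he0⟩ := hpos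
      obtain ⟨u0, v0, h0⟩ : ∃ a b, G.Adj a b := by
        revert he0
        induction e0 using Sym2.ind with
        | _ a b => exact fun h => ⟨a, b, h⟩
      obtain ⟨x, y, hxy, hleaf⟩ := exists_leaf hac h0
      set D : Set (Sym2 V) := {f | y ∈ f} with hD
      set G' := G.deleteEdges D with hG'
      have hle : G' ≤ G := G.deleteEdges_le D
      have hac' : G'.IsAcyclic := fun v c hc => hac (c.mapLe hle) (hc.mapLe hle)
      have hEsub : G'.edgeSet ⊂ G.edgeSet := by
        rw [hG', SimpleGraph.edgeSet_deleteEdges]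
        refine ⟨Set.diff_subset, fun hsub => ?_⟩
        have h1 : s(x, y) ∈ G.edgeSet := hxy
        have h2 := hsub h1
        exact h2.2 (by simp [hD])
      have hcount : G'.edgeSet.ncard ≤ k := by
        have := Set.ncard_lt_ncard hEsub (Set.toFinite _)
        omega
      have hIH := ih G' hcount hac'
      -- independence part
      obtain ⟨s', hs', hscard⟩ := exists_maxIndep G'
      have hindG : G.IsIndepSet' (s' \ {y}) := by
        intro a ha b hb hne hadj
        have : G'.Adj a b := by
          rw [hG', SimpleGraph.deleteEdges_adj]
          refine ⟨hadj, ?_⟩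
          simp only [hD, Set.mem_setOf_eq, Sym2.mem_iff]
          rintro (rfl | rfl)
          · exact ha.2 rfl
          · exact hb.2 rfl
        exact hs' ha.1 hb.1 hne this
      have hindcard : _root_.indepNum G' ≤ _root_.indepNum G + 1 := by
        have h3 := le_indepNum hindG
        by_cases hy : y ∈ s'
        · have := Set.ncard_diff_singleton_add_one hy (Set.toFinite s')
          omega
        · rw [Set.diff_singleton_eq_self hy] at h3
          omega
      -- matching part
      obtain ⟨M', hM', hMcard⟩ := exists_maxMatching G'
      have hyv : y ∉ M'.verts := by
        intro hy
        obtain ⟨w, hw, -⟩ := hM' hy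
        have := M'.adj_sub hw
        rw [hG', SimpleGraph.deleteEdges_adj] at this
        exact this.2 (by simp [hD])
      have hxv : x ∉ M'.verts := by
        intro hx
        obtain ⟨w, hw, -⟩ := hM' hx
        have hGxw := M'.adj_sub hw
        have hwy : w = y := hleaf w (hle hGxw)
        subst hwy
        rw [hG', SimpleGraph.deleteEdges_adj] at hGxw
        exact hGxw.2 (by simp [hD])
      set M'' := liftSub hle M' with hM''
      have hM''m : M''.IsMatching := liftSub_matching hM'
      have hdisj : Disjoint M''.support (G.subgraphOfAdj hxy).support := by
        rw [Set.disjoint_left]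
        intro a ha hb
        have ha' : a ∈ M'.verts := by
          rw [← liftSub_verts hle M', ← hM'']
          exact M''.support_subset_verts ha
        have hb' := (G.subgraphOfAdj hxy).support_subset_verts hb
        rw [SimpleGraph.subgraphOfAdj_verts] at hb'
        rcases hb' with rfl | rfl
        · exact hxv ha'
        · exact hyv ha'
      have hsup : (M'' ⊔ G.subgraphOfAdj hxy).IsMatching :=
        hM''m.sup (SimpleGraph.Subgraph.IsMatching.subgraphOfAdj hxy) hdisj
      have hnotmem : s(x, y) ∉ M''.edgeSet := by
        intro hmem
        rw [hM'', liftSub_edgeSet, SimpleGraph.Subgraph.mem_edgeSet] at hmem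
        have := M'.adj_sub hmem
        rw [hG', SimpleGraph.deleteEdges_adj] at this
        exact this.2 (by simp [hD])
      have hedgecard : (M'' ⊔ G.subgraphOfAdj hxy).edgeSet.ncard = M'.edgeSet.ncard + 1 := by
        rw [SimpleGraph.Subgraph.edgeSet_sup, SimpleGraph.edgeSet_subgraphOfAdj,
          Set.union_singleton, Set.ncard_insert_of_notMem hnotmem (Set.toFinite _),
          hM'', liftSub_edgeSet]
      have hmatchcard : matchNum G' + 1 ≤ matchNum G := by
        have := le_matchNum hsup
        omega
      omega

/-- A finite connected graph has at least `n - 1` edges. -/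
private lemma conn_bound [Fintype V] :
    ∀ (k : ℕ) (G : SimpleGraph V), G.edgeSet.ncard ≤ k → G.Connected →
      Fintype.card V ≤ G.edgeSet.ncard + 1 := by
  intro k
  induction k with
  | zero =>
    intro G hk hconn
    by_cases hac : G.IsAcyclic
    · have htree : G.IsTree := ⟨hconn, hac⟩
      classical
      have : Fintype G.edgeSet := (Set.toFinite _).fintype
      have hcard := htree.card_edgeFinset
      have hrel : G.edgeSet.ncard = G.edgeFinset.card := by
        rw [SimpleGraph.edgeFinset, Set.ncard_eq_toFinset_card']
      omega
    · exfalso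
      rw [SimpleGraph.IsAcyclic] at hac
      push_neg at hac
      obtain ⟨v', c', hc'⟩ := hac
      have h3 := hc'.three_le_length
      have : c'.edges ≠ [] := by
        intro h
        have := c'.length_edges
        rw [h] at this
        simp at this
        omega
      obtain ⟨f, hf⟩ := List.exists_mem_of_ne_nil _ this
      have : f ∈ G.edgeSet := c'.edges_subset_edgeSet hf
      have : 0 < G.edgeSet.ncard := (Set.ncard_pos (Set.toFinite _)).mpr ⟨f, this⟩
      omega
  | succ k ih =>
    intro G hk hconn
    by_cases hk' : G.edgeSet.ncard ≤ k
    · exact ih G hk' hconn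
    · by_cases hac : G.IsAcyclic
      · have htree : G.IsTree := ⟨hconn, hac⟩
        classical
        have : Fintype G.edgeSet := (Set.toFinite _).fintype
        have hcard := htree.card_edgeFinset
        have hrel : G.edgeSet.ncard = G.edgeFinset.card := by
          rw [SimpleGraph.edgeFinset, Set.ncard_eq_toFinset_card']
        omega
      · rw [SimpleGraph.IsAcyclic] at hac
        push_neg at hac
        obtain ⟨v', c', hc'⟩ := hac
        have h3 := hc'.three_le_length
        have hne : c'.edges ≠ [] := by
          intro h
          have := c'.length_edges
          rw [h] at this
          simp at this
          omega
        obtain ⟨f, hf⟩ := List.exists_mem_of_ne_nil _ hne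
        have hfE : f ∈ G.edgeSet := c'.edges_subset_edgeSet hf
        have hconn' : (G.deleteEdges {f}).Connected :=
          connected_deleteEdges_of_cycle hconn hc' hf
        have hcount : (G.deleteEdges {f}).edgeSet.ncard = G.edgeSet.ncard - 1 := by
          rw [SimpleGraph.edgeSet_deleteEdges,
            Set.ncard_diff_singleton_of_mem hfE]
        have hpos : 0 < G.edgeSet.ncard := (Set.ncard_pos (Set.toFinite _)).mpr ⟨f, hfE⟩
        have := ih (G.deleteEdges {f}) (by omega) hconn'
        omega

end Aux

theorem stmt8 {V : Type*} [Fintype V] (G : SimpleGraph V)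
    (hconn : G.Connected) (huni : G.edgeSet.ncard = Fintype.card V)
    {v : V} (c : G.Walk v v) (hc : c.IsCycle)
    (hsum : indepNum G + matchNum G = Fintype.card V - 1) :
    ∀ e ∈ c.edges, matchNum (G.deleteEdges {e}) = matchNum G ∧
      indepNum (G.deleteEdges {e}) = indepNum G + 1 := by
  intro e he
  have heE : e ∈ G.edgeSet := c.edges_subset_edgeSet he
  set T := G.deleteEdges {e} with hT
  have hTconn : T.Connected := connected_deleteEdges_of_cycle hconn hc he
  have hn1 : 1 ≤ Fintype.card V := Fintype.card_pos_iff.mpr ⟨v⟩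
  have hGE1 : 0 < G.edgeSet.ncard := (Set.ncard_pos (Set.toFinite _)).mpr ⟨e, heE⟩
  have hTcard : T.edgeSet.ncard = Fintype.card V - 1 := by
    rw [hT, SimpleGraph.edgeSet_deleteEdges,
      Set.ncard_diff_singleton_of_mem heE, huni]
  have hTacyc : T.IsAcyclic := by
    by_contra hac
    rw [SimpleGraph.IsAcyclic] at hac
    push_neg at hac
    obtain ⟨v', c', hc'⟩ := hac
    have h3 := hc'.three_le_length
    have hne : c'.edges ≠ [] := by
      intro h
      have := c'.length_edges
      rw [h] at this
      simp at this
      omega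
    obtain ⟨f, hf⟩ := List.exists_mem_of_ne_nil _ hne
    have hfE : f ∈ T.edgeSet := c'.edges_subset_edgeSet hf
    have hconn' : (T.deleteEdges {f}).Connected :=
      connected_deleteEdges_of_cycle hTconn hc' hf
    have hTpos : 0 < T.edgeSet.ncard := (Set.ncard_pos (Set.toFinite _)).mpr ⟨f, hfE⟩
    have hcount : (T.deleteEdges {f}).edgeSet.ncard = T.edgeSet.ncard - 1 := by
      rw [SimpleGraph.edgeSet_deleteEdges,
        Set.ncard_diff_singleton_of_mem hfE]
    have := conn_bound (T.deleteEdges {f}).edgeSet.ncard (T.deleteEdges {f}) le_rfl hconn'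
    omega
  have h1 : Fintype.card V ≤ indepNum T + matchNum T :=
    forest_bound T.edgeSet.ncard T le_rfl hTacyc
  have h2 : matchNum T ≤ matchNum G := matchNum_mono (G.deleteEdges_le _)
  have h3 : indepNum T ≤ indepNum G + 1 := by
    induction e using Sym2.ind with
    | _ x y => exact indepNum_deleteEdge_le G x y
  exact ⟨by omega, by omega⟩
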